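/- (Theorem 3.3(iii); full high-energy expansion of the scattering amplitude, d=3.) For every M ∈ ℕ there exist constants C > 0 and κ₀ > 0 such that for all κ ≥ κ₀ the matrix A(κ) is invertible and for all k, ℓ ∈ ℝ³ with |k| = |ℓ| = κ one has |f(k,ℓ) + (i/(2π²)) Σ_{m=0}^M (−4πi)^m C_m(k,ℓ) κ^{−m−1}| ≤ C κ^{−M−2}. -/

import Mathlib

open Complex Finset Matrix

noncomputable section

/-- The matrix `A(κ)` for a three-dimensional multipoint potential:
`A(κ)_{jj} = α_j - iκ/(4π)`,
`A(κ)_{jj'} = -e^{iκ‖y_j - y_{j'}‖}/(4π‖y_j - y_{j'}‖)` for `j ≠ j'`. -/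
def A3 (n : ℕ) (y : Fin n → EuclideanSpace ℝ (Fin 3)) (α : Fin n → ℂ) (κ : ℝ) :
    Matrix (Fin n) (Fin n) ℂ :=
  fun j j' =>
    if j = j' then α j - Complex.I * κ / (4 * Real.pi)
    else -Complex.exp (Complex.I * κ * ‖y j - y j'‖) / (4 * Real.pi * ‖y j - y j'‖)

/-- `q(k) = A(κ)⁻¹ b(k)` with `b(k)_j = -e^{i k·y_j}`. -/
def q3 (n : ℕ) (y : Fin n → EuclideanSpace ℝ (Fin 3)) (α : Fin n → ℂ) (κ : ℝ)
    (k : EuclideanSpace ℝ (Fin 3)) : Fin n → ℂ :=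
  (A3 n y α κ)⁻¹ *ᵥ fun j => -Complex.exp (Complex.I * (inner ℝ k (y j) : ℝ))

/-- The scattering amplitude `f(k,ℓ) = (2π)⁻³ Σ_j q_j(k) e^{-iℓ·y_j}`. -/
def f3 (n : ℕ) (y : Fin n → EuclideanSpace ℝ (Fin 3)) (α : Fin n → ℂ) (κ : ℝ)
    (k ℓ : EuclideanSpace ℝ (Fin 3)) : ℂ :=
  ((2 * Real.pi : ℂ) ^ 3)⁻¹ *
    ∑ j, q3 n y α κ k j * Complex.exp (-Complex.I * (inner ℝ ℓ (y j) : ℝ))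

/-- The matrix `W(κ)`: `W(κ)_{jj} = α_j`,
`W(κ)_{jj'} = -e^{iκ‖y_j - y_{j'}‖}/(4π‖y_j - y_{j'}‖)` for `j ≠ j'`. -/
def W3 (n : ℕ) (y : Fin n → EuclideanSpace ℝ (Fin 3)) (α : Fin n → ℂ) (κ : ℝ) :
    Matrix (Fin n) (Fin n) ℂ :=
  fun j j' =>
    if j = j' then α j
    else -Complex.exp (Complex.I * κ * ‖y j - y j'‖) / (4 * Real.pi * ‖y j - y j'‖)

/-- The coefficients `C_m(k,ℓ) = Σ_{j,j'} [W(κ)^m]_{jj'} e^{i(k·y_{j'} - ℓ·y_j)}`. -/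
def C3coef (n : ℕ) (y : Fin n → EuclideanSpace ℝ (Fin 3)) (α : Fin n → ℂ) (κ : ℝ)
    (m : ℕ) (k ℓ : EuclideanSpace ℝ (Fin 3)) : ℂ :=
  ∑ j, ∑ j', (W3 n y α κ ^ m) j j' *
    Complex.exp (Complex.I * ((inner ℝ k (y j') : ℝ) - (inner ℝ ℓ (y j) : ℝ)))

section aux

attribute [local instance] Matrix.linftyOpNormedAddCommGroup Matrix.linftyOpNormedRing
  Matrix.linftyOpNormedSpace

local instance (n m : ℕ) : CompleteSpace (Matrix (Fin n) (Fin m) ℂ) :=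
  FiniteDimensional.complete ℂ _

private lemma scalar_key (κ : ℝ) (hπ : Real.pi ≠ 0) (hκ : κ ≠ 0) (m : ℕ) (Cm : ℂ) :
    ((2*(Real.pi:ℂ))^3)⁻¹ * ((-(-4*(Real.pi:ℂ)*Complex.I)/(κ:ℂ)) *
      -(((-4*(Real.pi:ℂ)*Complex.I)/(κ:ℂ))^m * Cm)) +
    Complex.I/(2*(Real.pi:ℂ)^2) * ((-4*(Real.pi:ℂ)*Complex.I)^m * Cm/(κ:ℂ)^(m+1)) = 0 := by
  have hπ' : ((Real.pi : ℂ)) ≠ 0 := by exact_mod_cast hπ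
  have hκ' : ((κ : ℂ)) ≠ 0 := by exact_mod_cast hκ
  rw [div_pow]
  field_simp
  ring_nf
  try simp [Complex.I_sq]

/-- Theorem 3.3(iii): full high-energy expansion of the scattering amplitude, d = 3. -/
theorem stmt5 (n : ℕ) (y : Fin n → EuclideanSpace ℝ (Fin 3)) (α : Fin n → ℂ)
    (hy : Function.Injective y) (M : ℕ) :
    ∃ C > (0 : ℝ), ∃ κ₀ > (0 : ℝ), ∀ κ ≥ κ₀, IsUnit (A3 n y α κ) ∧
      ∀ k ℓ : EuclideanSpace ℝ (Fin 3), ‖k‖ = κ → ‖ℓ‖ = κ →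
        ‖f3 n y α κ k ℓ +
            Complex.I / (2 * (Real.pi : ℂ) ^ 2) *
              ∑ m ∈ Finset.range (M + 1),
                (-4 * (Real.pi : ℂ) * Complex.I) ^ m *
                  C3coef n y α κ m k ℓ / (κ : ℂ) ^ (m + 1)‖ ≤
          C / κ ^ (M + 2) := by
  have hπ : (0:ℝ) < Real.pi := Real.pi_pos
  have hπc : (Real.pi : ℂ) ≠ 0 := by exact_mod_cast Real.pi_ne_zero
  set L : ℝ := ‖W3 n y α 0‖ with hLdef
  have hL0 : 0 ≤ L := norm_nonneg _
  have hWn : ∀ κ : ℝ, ‖W3 n y α κ‖ = L := by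
    intro κ
    have hent : ∀ κ' (j j' : Fin n), ‖W3 n y α κ' j j'‖₊ = (if j = j' then ‖α j‖₊ else
        ‖(-Complex.exp 0 / (4 * Real.pi * ‖y j - y j'‖) : ℂ)‖₊) := by
      intro κ' j j'
      by_cases h : j = j'
      · simp [W3, h]
      · have hre : (Complex.I * κ' * ‖y j - y j'‖ : ℂ) =
            ((κ' * ‖y j - y j'‖ : ℝ) : ℂ) * Complex.I := by push_cast; ring
        simp only [W3, if_neg h]
        ext
        have hn1 : ‖Complex.exp ((κ' : ℂ) * ((‖y j - y j'‖ : ℝ) : ℂ) * Complex.I)‖ = 1 := by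
          rw [← Complex.ofReal_mul]; exact Complex.norm_exp_ofReal_mul_I _
        simp [hre, nnnorm_div, map_div₀, Complex.norm_exp_ofReal_mul_I, hn1]
    have hnn : ‖W3 n y α κ‖₊ = ‖W3 n y α 0‖₊ := by
      rw [Matrix.linfty_opNNNorm_def, Matrix.linfty_opNNNorm_def]
      refine Finset.sup_congr rfl fun i _ => Finset.sum_congr rfl fun j _ => ?_
      rw [hent κ i j, hent 0 i j]
    calc ‖W3 n y α κ‖ = (‖W3 n y α κ‖₊ : ℝ) := (coe_nnnorm _).symm
      _ = L := by rw [hnn]; exact coe_nnnorm _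
  refine ⟨((2*Real.pi)^3)⁻¹ * n * (8*Real.pi) * (4*Real.pi*L)^(M+1) + 1, by positivity,
    8*Real.pi*(L+1), by positivity, ?_⟩
  intro κ hκ
  have hκpos : 0 < κ := lt_of_lt_of_le (by positivity) hκ
  have hκ' : (κ : ℂ) ≠ 0 := by exact_mod_cast hκpos.ne'
  have h1 : (-(Complex.I * (κ:ℂ) / (4 * Real.pi))) * ((-4*(Real.pi:ℂ)*Complex.I)/(κ:ℂ)) = -1 := by
    field_simp
    ring_nf
    simp [Complex.I_sq]
  have hc : (-(Complex.I * (κ:ℂ) / (4 * Real.pi))) ≠ 0 := by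
    intro h0
    rw [h0, zero_mul] at h1
    exact absurd h1 (by norm_num)
  have hA : A3 n y α κ = (-(Complex.I * (κ:ℂ) / (4 * Real.pi))) •
      ((1 : Matrix (Fin n) (Fin n) ℂ) - ((-4*(Real.pi:ℂ)*Complex.I)/(κ:ℂ)) • W3 n y α κ) := by
    ext i j
    by_cases h : i = j
    · subst h
      simp only [A3, W3, eq_self_iff_true, if_true, Matrix.smul_apply, Matrix.sub_apply,
        Matrix.one_apply_eq, smul_eq_mul]
      linear_combination (α i) * h1
    · simp only [A3, W3, if_neg h, Matrix.smul_apply, Matrix.sub_apply, Matrix.one_apply_ne h,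
        smul_eq_mul]
      linear_combination
        (-Complex.exp (Complex.I * κ * ‖y i - y j‖) / (4 * Real.pi * ‖y i - y j‖)) * h1
  set s : ℂ := -4 * (Real.pi : ℂ) * Complex.I with hs
  set c : ℂ := -(Complex.I * (κ:ℂ) / (4 * Real.pi)) with hcdef
  set W : Matrix (Fin n) (Fin n) ℂ := W3 n y α κ with hWdef
  set x : Matrix (Fin n) (Fin n) ℂ := (s/(κ:ℂ)) • W with hxdef
  have hcinv : c⁻¹ = -(s/(κ:ℂ)) := by
    refine inv_eq_of_mul_eq_one_right ?_
    rw [mul_neg, h1, neg_neg]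
  have hxnorm : ‖x‖ ≤ 4*Real.pi*L/κ := by
    have h2 : ‖s/(κ:ℂ)‖ = 4*Real.pi/κ := by
      rw [hs, norm_div]
      have h3 : (-4*(Real.pi:ℂ)*Complex.I) = ((-(4*Real.pi) : ℝ):ℂ) * Complex.I := by
        push_cast; ring
      rw [h3, norm_mul, Complex.norm_real, Complex.norm_I, mul_one, Complex.norm_real,
        Real.norm_eq_abs, Real.norm_eq_abs, abs_of_pos hκpos, abs_neg,
        abs_of_pos (by positivity : (0:ℝ) < 4*Real.pi)]
    calc ‖x‖ = ‖s/(κ:ℂ)‖ * ‖W‖ := by rw [hxdef, norm_smul]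
      _ = (4*Real.pi/κ) * L := by rw [h2, hWdef, hWn κ]
      _ ≤ 4*Real.pi*L/κ := le_of_eq (by ring)
  have hxhalf : ‖x‖ ≤ 1/2 := by
    refine le_trans hxnorm ?_
    rw [div_le_iff₀ hκpos]
    nlinarith [hπ, hL0, hκ]
  have hxlt : ‖x‖ < 1 := lt_of_le_of_lt hxhalf (by norm_num)
  set u : (Matrix (Fin n) (Fin n) ℂ)ˣ := Units.oneSub x hxlt with hu
  set R : Matrix (Fin n) (Fin n) ℂ := ↑u⁻¹ with hRdef
  have huval : (u : Matrix (Fin n) (Fin n) ℂ) = 1 - x := rfl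
  have hRB : (1 - x) * R = 1 := by rw [hRdef, ← huval]; exact u.mul_inv
  have hBR : R * (1 - x) = 1 := by rw [hRdef, ← huval]; exact u.inv_mul
  have hone : ‖(1 : Matrix (Fin n) (Fin n) ℂ)‖ ≤ 1 := by
    rw [← Matrix.diagonal_one, Matrix.linfty_opNorm_diagonal]
    refine (pi_norm_le_iff_of_nonneg zero_le_one).2 fun j => by simp
  have hR2 : ‖R‖ ≤ 2 := by
    have hid : R = 1 + x * R := by
      have h3 := hRB
      rw [sub_mul, one_mul] at h3
      exact sub_eq_iff_eq_add.mp h3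
    have h4 : ‖R‖ ≤ 1 + (1/2) * ‖R‖ := by
      calc ‖R‖ = ‖1 + x * R‖ := by rw [← hid]
        _ ≤ ‖(1 : Matrix (Fin n) (Fin n) ℂ)‖ + ‖x * R‖ := norm_add_le _ _
        _ ≤ 1 + ‖x‖ * ‖R‖ := add_le_add hone (norm_mul_le _ _)
        _ ≤ 1 + (1/2) * ‖R‖ := by
            have h5 := mul_le_mul_of_nonneg_right hxhalf (norm_nonneg R)
            linarith
    linarith
  have hdet : IsUnit ((1 : Matrix (Fin n) (Fin n) ℂ) - x).det := by
    rw [← huval]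
    exact (Matrix.isUnit_iff_isUnit_det _).1 u.isUnit
  have hAunit : IsUnit (A3 n y α κ) := by
    rw [hA, Matrix.isUnit_iff_isUnit_det, Matrix.det_smul, Fintype.card_fin]
    exact (hc.isUnit.pow n).mul hdet
  refine ⟨hAunit, ?_⟩
  intro k ℓ hk hℓ
  have hBinv : ((1 : Matrix (Fin n) (Fin n) ℂ) - x)⁻¹ = R := by
    rw [Matrix.nonsing_inv_eq_ringInverse, ← huval, Ring.inverse_unit, hRdef]
  have hAinv : (A3 n y α κ)⁻¹ = c⁻¹ • R := by
    letI : Invertible c := invertibleOfNonzero hc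
    rw [hA, Matrix.inv_smul _ c hdet, hBinv, invOf_eq_inv]
  set P : Matrix (Fin n) (Fin n) ℂ := ∑ m ∈ Finset.range (M+1), x ^ m with hPdef
  have hgeo : ((1 : Matrix (Fin n) (Fin n) ℂ) - x) * P = 1 - x ^ (M+1) := by
    have h4 := mul_geom_sum x (M+1)
    calc ((1 : Matrix (Fin n) (Fin n) ℂ) - x) * P
        = -((x - 1) * ∑ m ∈ Finset.range (M+1), x ^ m) := by
          rw [hPdef, ← neg_sub x 1, neg_mul]
      _ = 1 - x ^ (M+1) := by rw [h4, neg_sub]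
  have hPR : R = P + R * x ^ (M+1) := by
    have h5 : R * (((1 : Matrix (Fin n) (Fin n) ℂ) - x) * P) = R * (1 - x ^ (M+1)) := by
      rw [hgeo]
    rw [← mul_assoc, hBR, one_mul, mul_sub, mul_one] at h5
    rw [h5, sub_add_cancel]
  set b : Fin n → ℂ := fun j => -Complex.exp (Complex.I * (inner ℝ k (y j) : ℝ)) with hbdef
  set e : Fin n → ℂ := fun j => Complex.exp (-Complex.I * (inner ℝ ℓ (y j) : ℝ)) with hedef
  have hsplit : f3 n y α κ k ℓ =
      ((2*(Real.pi:ℂ))^3)⁻¹ * ∑ j, (c⁻¹ • (P *ᵥ b)) j * e j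
      + ((2*(Real.pi:ℂ))^3)⁻¹ * ∑ j, (c⁻¹ • ((R * x^(M+1)) *ᵥ b)) j * e j := by
    have he : ∀ j, Complex.exp (-Complex.I * (inner ℝ ℓ (y j) : ℝ)) = e j := fun j => rfl
    rw [f3, q3, hAinv, ← hbdef]
    simp only [he]
    conv_lhs => rw [hPR]
    rw [Matrix.smul_mulVec, Matrix.add_mulVec, smul_add, ← Matrix.smul_mulVec,
      ← Matrix.smul_mulVec]
    rw [← mul_add, ← Finset.sum_add_distrib]
    congr 1
    refine Finset.sum_congr rfl fun j _ => ?_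
    rw [Pi.add_apply, add_mul]
  have hterm : ∀ m : ℕ, ∑ j, (x ^ m *ᵥ b) j * e j
      = -((s/(κ:ℂ))^m * C3coef n y α κ m k ℓ) := by
    intro m
    have hbe : ∀ (j j' : Fin n), b j' * e j =
        -Complex.exp (Complex.I * (((inner ℝ k (y j') : ℝ) : ℂ) - ((inner ℝ ℓ (y j) : ℝ) : ℂ))) := by
      intro j j'
      rw [hbdef, hedef]
      show (-Complex.exp _) * Complex.exp _ = _
      rw [show Complex.I * (((inner ℝ k (y j') : ℝ) : ℂ) - ((inner ℝ ℓ (y j) : ℝ) : ℂ))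
          = Complex.I * ((inner ℝ k (y j') : ℝ) : ℂ)
            + (-Complex.I) * ((inner ℝ ℓ (y j) : ℝ) : ℂ) by ring]
      rw [Complex.exp_add]
      ring
    have hxp : x ^ m = (s/(κ:ℂ))^m • W ^ m := by rw [hxdef, smul_pow]
    rw [hxp]
    rw [C3coef]
    calc ∑ j, (((s/(κ:ℂ))^m • W ^ m) *ᵥ b) j * e j
        = ∑ j, (s/(κ:ℂ))^m * ∑ j', (W ^ m) j j' * (b j' * e j) := by
          refine Finset.sum_congr rfl fun j _ => ?_
          rw [Matrix.smul_mulVec, Pi.smul_apply, smul_eq_mul, Matrix.mulVec, dotProduct,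
            mul_assoc, Finset.sum_mul]
          congr 1
          exact Finset.sum_congr rfl fun j' _ => mul_assoc _ _ _
      _ = -((s/(κ:ℂ))^m * ∑ j, ∑ j', (W ^ m) j j' *
            Complex.exp (Complex.I * (((inner ℝ k (y j') : ℝ) : ℂ) - ((inner ℝ ℓ (y j) : ℝ) : ℂ)))) := by
          simp only [hbe, mul_neg, Finset.sum_neg_distrib, Finset.mul_sum]
      _ = _ := by rw [hWdef]
  have hPv : P *ᵥ b = ∑ m ∈ Finset.range (M+1), x ^ m *ᵥ b := by
    rw [hPdef]
    ext j
    simp [Matrix.mulVec, dotProduct, Matrix.sum_apply, Finset.sum_apply, Finset.sum_mul]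
    rw [Finset.sum_comm]
  have hmain : ((2*(Real.pi:ℂ))^3)⁻¹ * ∑ j, (c⁻¹ • (P *ᵥ b)) j * e j
      + Complex.I / (2 * (Real.pi : ℂ) ^ 2) *
          ∑ m ∈ Finset.range (M + 1), s ^ m * C3coef n y α κ m k ℓ / (κ : ℂ) ^ (m + 1) = 0 := by
    have h6 : ∑ j, (c⁻¹ • (P *ᵥ b)) j * e j
        = ∑ m ∈ Finset.range (M+1), c⁻¹ * -((s/(κ:ℂ))^m * C3coef n y α κ m k ℓ) := by
      calc ∑ j, (c⁻¹ • (P *ᵥ b)) j * e j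
          = c⁻¹ * ∑ j, (P *ᵥ b) j * e j := by
            rw [Finset.mul_sum]
            exact Finset.sum_congr rfl fun j _ => by
              rw [Pi.smul_apply, smul_eq_mul, mul_assoc]
        _ = c⁻¹ * ∑ m ∈ Finset.range (M+1), ∑ j, (x ^ m *ᵥ b) j * e j := by
            rw [hPv]
            congr 1
            rw [Finset.sum_comm]
            refine Finset.sum_congr rfl fun j _ => ?_
            rw [Finset.sum_apply, Finset.sum_mul]
        _ = ∑ m ∈ Finset.range (M+1), c⁻¹ * -((s/(κ:ℂ))^m * C3coef n y α κ m k ℓ) := by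
            rw [Finset.mul_sum]
            exact Finset.sum_congr rfl fun m _ => by rw [hterm m]
    rw [h6, Finset.mul_sum, Finset.mul_sum, ← Finset.sum_add_distrib]
    refine Finset.sum_eq_zero fun m _ => ?_
    rw [hcinv, hs]
    have := scalar_key κ hπ.ne' hκpos.ne' m (C3coef n y α κ m k ℓ)
    rw [neg_div] at this
    linear_combination this
  rw [hsplit]
  have hcancel : ((2*(Real.pi:ℂ))^3)⁻¹ * ∑ j, (c⁻¹ • (P *ᵥ b)) j * e j
      + ((2*(Real.pi:ℂ))^3)⁻¹ * ∑ j, (c⁻¹ • ((R * x^(M+1)) *ᵥ b)) j * e j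
      + Complex.I / (2 * (Real.pi : ℂ) ^ 2) *
          ∑ m ∈ Finset.range (M + 1), s ^ m * C3coef n y α κ m k ℓ / (κ : ℂ) ^ (m + 1)
      = ((2*(Real.pi:ℂ))^3)⁻¹ * ∑ j, (c⁻¹ • ((R * x^(M+1)) *ᵥ b)) j * e j := by
    linear_combination hmain
  rw [hcancel]
  -- now the norm bound
  set v : Fin n → ℂ := c⁻¹ • ((R * x^(M+1)) *ᵥ b) with hvdef
  have he1 : ∀ j, ‖e j‖ = 1 := by
    intro j
    rw [hedef]
    show ‖Complex.exp (-Complex.I * ((inner ℝ ℓ (y j) : ℝ) : ℂ))‖ = 1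
    rw [show (-Complex.I * ((inner ℝ ℓ (y j) : ℝ) : ℂ))
        = ((-(inner ℝ ℓ (y j)) : ℝ) : ℂ) * Complex.I by push_cast; ring]
    rw [Complex.norm_exp_ofReal_mul_I]
  have hb1 : ‖b‖ ≤ 1 := by
    refine (pi_norm_le_iff_of_nonneg zero_le_one).2 fun j => ?_
    rw [hbdef]
    show ‖-Complex.exp (Complex.I * ((inner ℝ k (y j) : ℝ) : ℂ))‖ ≤ 1
    rw [norm_neg, show (Complex.I * ((inner ℝ k (y j) : ℝ) : ℂ))
        = (((inner ℝ k (y j)) : ℝ) : ℂ) * Complex.I by push_cast; ring]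
    rw [Complex.norm_exp_ofReal_mul_I]
  have hcinvnorm : ‖c⁻¹‖ = 4*Real.pi/κ := by
    rw [hcinv, norm_neg, hs, norm_div]
    have h3 : (-4*(Real.pi:ℂ)*Complex.I) = ((-(4*Real.pi) : ℝ):ℂ) * Complex.I := by
      push_cast; ring
    rw [h3, norm_mul, Complex.norm_real, Complex.norm_I, mul_one, Complex.norm_real,
      Real.norm_eq_abs, Real.norm_eq_abs, abs_of_pos hκpos, abs_neg,
      abs_of_pos (by positivity : (0:ℝ) < 4*Real.pi)]
  have hRx : ‖R * x^(M+1)‖ ≤ 2 * (4*Real.pi*L/κ)^(M+1) := by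
    calc ‖R * x^(M+1)‖ ≤ ‖R‖ * ‖x^(M+1)‖ := norm_mul_le _ _
      _ ≤ 2 * ‖x‖^(M+1) :=
          mul_le_mul hR2 (norm_pow_le' x (Nat.succ_pos M)) (norm_nonneg _) (by norm_num)
      _ ≤ 2 * (4*Real.pi*L/κ)^(M+1) := by
          have h7 : ‖x‖^(M+1) ≤ (4*Real.pi*L/κ)^(M+1) :=
            pow_le_pow_left₀ (norm_nonneg _) hxnorm _
          linarith
  have hv : ‖v‖ ≤ (4*Real.pi/κ) * (2 * (4*Real.pi*L/κ)^(M+1)) := by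
    rw [hvdef, norm_smul, hcinvnorm]
    refine mul_le_mul_of_nonneg_left ?_ (by positivity)
    calc ‖(R * x^(M+1)) *ᵥ b‖ ≤ ‖R * x^(M+1)‖ * ‖b‖ := Matrix.linfty_opNorm_mulVec _ _
      _ ≤ (2 * (4*Real.pi*L/κ)^(M+1)) * 1 :=
          mul_le_mul hRx hb1 (norm_nonneg _) (by positivity)
      _ = 2 * (4*Real.pi*L/κ)^(M+1) := mul_one _
  have hnormcoef : ‖((2*(Real.pi:ℂ))^3)⁻¹‖ = ((2*Real.pi)^3)⁻¹ := by
    rw [show ((2*(Real.pi:ℂ))^3)⁻¹ = ((((2*Real.pi)^3)⁻¹ : ℝ) : ℂ) by push_cast; ring]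
    rw [Complex.norm_real, Real.norm_eq_abs, abs_of_pos (by positivity)]
  calc ‖((2*(Real.pi:ℂ))^3)⁻¹ * ∑ j, v j * e j‖
      = ((2*Real.pi)^3)⁻¹ * ‖∑ j, v j * e j‖ := by rw [norm_mul, hnormcoef]
    _ ≤ ((2*Real.pi)^3)⁻¹ * ∑ j, ‖v j * e j‖ := by
        refine mul_le_mul_of_nonneg_left (norm_sum_le _ _) (by positivity)
    _ = ((2*Real.pi)^3)⁻¹ * ∑ j, ‖v j‖ := by
        congr 1
        exact Finset.sum_congr rfl fun j _ => by rw [norm_mul, he1 j, mul_one]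
    _ ≤ ((2*Real.pi)^3)⁻¹ * (n * ‖v‖) := by
        refine mul_le_mul_of_nonneg_left ?_ (by positivity)
        calc ∑ j, ‖v j‖ ≤ ∑ _j : Fin n, ‖v‖ :=
              Finset.sum_le_sum fun j _ => norm_le_pi_norm v j
          _ = n * ‖v‖ := by rw [Finset.sum_const, Finset.card_univ, Fintype.card_fin,
              nsmul_eq_mul]
    _ ≤ ((2*Real.pi)^3)⁻¹ * (n * ((4*Real.pi/κ) * (2 * (4*Real.pi*L/κ)^(M+1)))) := by
        refine mul_le_mul_of_nonneg_left ?_ (by positivity)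
        exact mul_le_mul_of_nonneg_left hv (by positivity)
    _ = (((2*Real.pi)^3)⁻¹ * n * (8*Real.pi) * (4*Real.pi*L)^(M+1)) / κ^(M+2) := by
        rw [div_pow]
        field_simp
        ring
    _ ≤ (((2*Real.pi)^3)⁻¹ * n * (8*Real.pi) * (4*Real.pi*L)^(M+1) + 1) / κ^(M+2) := by
        have hd : (0:ℝ) < κ^(M+2) := by positivity
        exact (div_le_div_iff_of_pos_right hd).2 (by linarith)

end aux
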